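/- arXiv:1310.7359 — 2 statements merged into one kernel-verified Lean document; each statement's English description precedes it below -/
import Mathlib

section
/- The supremum of τ_t(H)/(n(H)+m(H)) over all 2-uniform hypergraphs H with no isolated vertices, no isolated edges and no multiple edges equals 2/5. -/
open Finset

attribute [local instance] Classical.propDecidable

variable {V : Type*} [Fintype V] [DecidableEq V]

/-- Two vertices are adjacent (neighbors) in a hypergraph if they are distinct
and share a common edge. -/
def HAdj (E : Finset (Finset V)) (u v : V) : Prop :=
  u ≠ v ∧ ∃ e ∈ E, u ∈ e ∧ v ∈ e

/-- A hypergraph is `k`-uniform if every edge has exactly `k` vertices. -/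
def Uniform (k : ℕ) (E : Finset (Finset V)) : Prop := ∀ e ∈ E, e.card = k

/-- No edge is isolated: every edge intersects some other edge. -/
def NoIsolatedEdge (E : Finset (Finset V)) : Prop :=
  ∀ e ∈ E, ∃ f ∈ E, f ≠ e ∧ ∃ v, v ∈ e ∧ v ∈ f

/-- The degree of a vertex: the number of edges containing it. -/
def hdeg (E : Finset (Finset V)) (v : V) : ℕ := (E.filter (fun e => v ∈ e)).card

/-- The number of vertices of degree exactly 1. -/
noncomputable def n1 (E : Finset (Finset V)) : ℕ :=
  (univ.filter (fun v => hdeg E v = 1)).card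

/-- The total domination number: minimum size of a set `D` such that every
vertex has a neighbor in `D`. -/
noncomputable def gammat (E : Finset (Finset V)) : ℕ :=
  sInf {n | ∃ D : Finset V, (∀ v : V, ∃ u ∈ D, HAdj E v u) ∧ D.card = n}

/-- The transversal number: minimum size of a vertex set meeting every edge. -/
noncomputable def tauh (E : Finset (Finset V)) : ℕ :=
  sInf {n | ∃ T : Finset V, (∀ e ∈ E, ∃ v ∈ T, v ∈ e) ∧ T.card = n}

/-- The total transversal number: minimum size of a transversal `T` in which
every vertex of `T` has a neighbor in `T`. -/
noncomputable def taut (E : Finset (Finset V)) : ℕ :=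
  sInf {n | ∃ T : Finset V, (∀ e ∈ E, ∃ v ∈ T, v ∈ e) ∧
    (∀ v ∈ T, ∃ u ∈ T, HAdj E v u) ∧ T.card = n}

/-- The strong transversal number: minimum size of a vertex set containing at
least two vertices from every edge. -/
noncomputable def tau2 (E : Finset (Finset V)) : ℕ :=
  sInf {n | ∃ T : Finset V, (∀ e ∈ E, 2 ≤ (e ∩ T).card) ∧ T.card = n}

-- property packaging the conclusion
def Good (E : Finset (Finset V)) : Prop :=
  ∃ T : Finset V, (∀ e ∈ E, ∃ x ∈ T, x ∈ e) ∧ (∀ x ∈ T, ∃ y ∈ T, HAdj E x y) ∧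
    5 * T.card ≤ 2 * ((univ.filter (fun x => ∃ e ∈ E, x ∈ e)).card + E.card)

lemma core (N : ℕ)
    (ih : ∀ E' : Finset (Finset V), E'.card ≤ N → Uniform 2 E' → NoIsolatedEdge E' → Good E')
    (E : Finset (Finset V)) (hcard : E.card ≤ N + 1) (hU : Uniform 2 E)
    (hNI : NoIsolatedEdge E) (v u : V) (hadj : HAdj E v u) (X : Finset V)
    (hXsupp : ∀ x ∈ X, ∃ e ∈ E, x ∈ e)
    (hXdeg : ∀ x ∈ X, ∀ g ∈ E, x ∈ g → (v ∈ g ∨ u ∈ g))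
    (hvX : v ∉ X) (huX : u ∉ X)
    (h3 : 3 ≤ X.card + (E.filter (fun g => v ∈ g ∨ u ∈ g)).card) :
    Good E := by
  classical
  set F := E.filter (fun g => v ∈ g ∨ u ∈ g) with hFdef
  set E0 := E \ F with hE0def
  set I := E0.filter (fun g => ∀ g' ∈ E0, g' ≠ g → ∀ x ∈ g', x ∉ g) with hIdef
  set E2 := E0 \ I with hE2def
  have hE0E : E0 ⊆ E := sdiff_subset
  have hIE0 : I ⊆ E0 := filter_subset _ _
  have hE2E0 : E2 ⊆ E0 := sdiff_subset
  have hE2E : E2 ⊆ E := hE2E0.trans hE0E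
  have hE0vu : ∀ g ∈ E0, v ∉ g ∧ u ∉ g := by
    intro g hg
    have := (mem_sdiff.1 hg).2
    rw [hFdef, mem_filter] at this
    push_neg at this
    exact this (hE0E hg)
  -- the edge containing v and u
  obtain ⟨hvu, e', he'E, hve', hue'⟩ := hadj
  have he'F : e' ∈ F := mem_filter.2 ⟨he'E, Or.inl hve'⟩
  -- E2 hypotheses
  have hU2 : Uniform 2 E2 := fun g hg => hU g (hE2E hg)
  have hNI2 : NoIsolatedEdge E2 := by
    intro g hg
    have hgE0 : g ∈ E0 := hE2E0 hg
    have hgI : g ∉ I := (mem_sdiff.1 hg).2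
    rw [hIdef, mem_filter] at hgI
    push_neg at hgI
    obtain ⟨g', hg'E0, hg'ne, x, hxg', hxg⟩ := hgI hgE0
    have hg'I : g' ∉ I := by
      intro hg'I
      have := (mem_filter.1 hg'I).2 g hgE0 (fun h => hg'ne h.symm) x hxg
      exact this hxg'
    exact ⟨g', mem_sdiff.2 ⟨hg'E0, hg'I⟩, hg'ne, x, hxg, hxg'⟩
  have hcard2 : E2.card ≤ N := by
    have hss : E2 ⊂ E := ⟨hE2E, fun hsub => by
      have : e' ∈ E2 := hsub he'E
      exact (hE0vu e' (hE2E0 this)).1 hve'⟩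
    have := card_lt_card hss
    omega
  obtain ⟨T', hT'cov, hT'tot, hT'card⟩ := ih E2 hcard2 hU2 hNI2
  -- picking cover vertices for isolated edges
  have Hpick : ∀ f' ∈ I, ∃ a, a ∈ f' ∧ (HAdj E a v ∨ HAdj E a u) := by
    intro f' hf'
    have hf'E0 : f' ∈ E0 := hIE0 hf'
    have hf'E : f' ∈ E := hE0E hf'E0
    obtain ⟨g, hgE, hgne, a, haf', hag⟩ := hNI f' hf'E
    have hgF : g ∈ F := by
      by_contra hgF
      have hgE0 : g ∈ E0 := mem_sdiff.2 ⟨hgE, hgF⟩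
      exact ((mem_filter.1 hf').2 g hgE0 hgne a hag) haf'
    have hvug := (mem_filter.1 hgF).2
    have hane : a ≠ v ∧ a ≠ u := by
      have := hE0vu f' hf'E0
      constructor <;> rintro rfl
      · exact this.1 haf'
      · exact this.2 haf'
    refine ⟨a, haf', ?_⟩
    rcases hvug with hv | hu
    · exact Or.inl ⟨hane.1, g, hgE, hag, hv⟩
    · exact Or.inr ⟨hane.2, g, hgE, hag, hu⟩
  set pick : Finset V → V := fun f' =>
    if hc : ∃ a, a ∈ f' ∧ (HAdj E a v ∨ HAdj E a u) then hc.choose else v with hpickdef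
  have hpick : ∀ f' ∈ I, pick f' ∈ f' ∧ (HAdj E (pick f') v ∨ HAdj E (pick f') u) := by
    intro f' hf'
    have hc := Hpick f' hf'
    simp only [hpickdef, dif_pos hc]
    exact hc.choose_spec
  set A := I.image pick with hAdef
  set T := insert v (insert u (A ∪ T')) with hTdef
  have hT'T : T' ⊆ T := fun x hx => by
    simp only [hTdef, mem_insert, mem_union]; tauto
  refine ⟨T, ?_, ?_, ?_⟩
  · -- coverage
    intro g hg
    by_cases hgF : g ∈ F
    · rcases (mem_filter.1 hgF).2 with h | h
      · exact ⟨v, by simp [hTdef], h⟩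
      · exact ⟨u, by simp [hTdef], h⟩
    · have hgE0 : g ∈ E0 := mem_sdiff.2 ⟨hg, hgF⟩
      by_cases hgI : g ∈ I
      · refine ⟨pick g, ?_, (hpick g hgI).1⟩
        simp only [hTdef, mem_insert, mem_union]
        exact Or.inr (Or.inr (Or.inl (mem_image_of_mem _ hgI)))
      · obtain ⟨x, hxT', hxg⟩ := hT'cov g (mem_sdiff.2 ⟨hgE0, hgI⟩)
        exact ⟨x, hT'T hxT', hxg⟩
  · -- totality
    intro x hx
    simp only [hTdef, mem_insert, mem_union] at hx
    rcases hx with rfl | rfl | hxA | hxT'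
    · exact ⟨u, by simp [hTdef], hvu, e', he'E, hve', hue'⟩
    · exact ⟨v, by simp [hTdef], hvu.symm, e', he'E, hue', hve'⟩
    · obtain ⟨f', hf'I, rfl⟩ := mem_image.1 hxA
      rcases (hpick f' hf'I).2 with h | h
      · exact ⟨v, by simp [hTdef], h⟩
      · exact ⟨u, by simp [hTdef], h⟩
    · obtain ⟨y, hyT', hyadj⟩ := hT'tot x hxT'
      exact ⟨y, hT'T hyT', hyadj.1, by
        obtain ⟨g, hg, h1, h2⟩ := hyadj.2
        exact ⟨g, hE2E hg, h1, h2⟩⟩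
  · -- cardinality
    have hTcard : T.card ≤ 2 + (I.card + T'.card) := by
      calc T.card ≤ (insert u (A ∪ T')).card + 1 := card_insert_le _ _
        _ ≤ (A ∪ T').card + 1 + 1 := by have := card_insert_le u (A ∪ T'); omega
        _ ≤ A.card + T'.card + 1 + 1 := by have := card_union_le A T'; omega
        _ ≤ 2 + (I.card + T'.card) := by
            have hA : A.card ≤ I.card := by rw [hAdef]; exact card_image_le
            omega
    set S := univ.filter (fun x => ∃ e ∈ E, x ∈ e) with hSdef
    set S2 := univ.filter (fun x => ∃ e ∈ E2, x ∈ e) with hS2def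
    set B := I.biUnion (fun g => g) with hBdef
    have hIdisj : ∀ f1 ∈ I, ∀ f2 ∈ I, f1 ≠ f2 → Disjoint f1 f2 := by
      intro f1 h1 f2 h2 hne
      rw [disjoint_left]
      intro x hx1 hx2
      exact (mem_filter.1 h2).2 f1 (hIE0 h1) hne x hx1 hx2
    have hBcard : B.card = 2 * I.card := by
      rw [hBdef, card_biUnion hIdisj]
      rw [Finset.sum_congr rfl (fun f' hf' => hU f' (hE0E (hIE0 hf')))]
      simp [mul_comm]
    have hvB : v ∉ B := by
      simp only [hBdef, mem_biUnion]
      rintro ⟨f', hf', hv⟩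
      exact (hE0vu f' (hIE0 hf')).1 hv
    have huB : u ∉ B := by
      simp only [hBdef, mem_biUnion]
      rintro ⟨f', hf', hu⟩
      exact (hE0vu f' (hIE0 hf')).2 hu
    have hXB : Disjoint X B := by
      rw [disjoint_left]
      intro x hxX hxB
      simp only [hBdef, mem_biUnion] at hxB
      obtain ⟨f', hf', hxf'⟩ := hxB
      have := hXdeg x hxX f' (hE0E (hIE0 hf')) hxf'
      have h2 := hE0vu f' (hIE0 hf')
      tauto
    set W := insert v (insert u (X ∪ B)) with hWdef
    have hWcard : W.card = 2 + (X.card + 2 * I.card) := by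
      rw [hWdef, card_insert_of_notMem, card_insert_of_notMem,
        card_union_of_disjoint hXB, hBcard]
      · omega
      · simp only [mem_union]; tauto
      · simp only [mem_insert, mem_union]
        push_neg
        exact ⟨hvu, hvX, hvB⟩
    have hWS : W ⊆ S := by
      intro x hx
      simp only [hWdef, mem_insert, mem_union] at hx
      simp only [hSdef, mem_filter, mem_univ, true_and]
      rcases hx with rfl | rfl | hxX | hxB
      · exact ⟨e', he'E, hve'⟩
      · exact ⟨e', he'E, hue'⟩
      · exact hXsupp x hxX
      · simp only [hBdef, mem_biUnion] at hxB
        obtain ⟨f', hf', hxf'⟩ := hxB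
        exact ⟨f', hE0E (hIE0 hf'), hxf'⟩
    have hWS2 : Disjoint W S2 := by
      rw [disjoint_left]
      intro x hxW hxS2
      simp only [hS2def, mem_filter, mem_univ, true_and] at hxS2
      obtain ⟨g, hgE2, hxg⟩ := hxS2
      have hgE0 : g ∈ E0 := hE2E0 hgE2
      simp only [hWdef, mem_insert, mem_union] at hxW
      rcases hxW with rfl | rfl | hxX | hxB
      · exact (hE0vu g hgE0).1 hxg
      · exact (hE0vu g hgE0).2 hxg
      · rcases hXdeg x hxX g (hE0E hgE0) hxg with h | h
        · exact (hE0vu g hgE0).1 h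
        · exact (hE0vu g hgE0).2 h
      · simp only [hBdef, mem_biUnion] at hxB
        obtain ⟨f', hf', hxf'⟩ := hxB
        have hgne : g ≠ f' := by
          rintro rfl
          exact (mem_sdiff.1 hgE2).2 hf'
        exact (mem_filter.1 hf').2 g hgE0 hgne x hxg hxf'
    have hS2S : S2 ⊆ S := by
      intro x hx
      simp only [hS2def, mem_filter, mem_univ, true_and] at hx
      obtain ⟨g, hg, hxg⟩ := hx
      simp only [hSdef, mem_filter, mem_univ, true_and]
      exact ⟨g, hE2E hg, hxg⟩
    have hScard : S2.card + W.card ≤ S.card := by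
      rw [← card_union_of_disjoint hWS2.symm]
      exact card_le_card (union_subset hS2S hWS)
    have hm0 : E0.card + F.card = E.card := card_sdiff_add_card_eq_card (filter_subset _ _)
    have hm2 : E2.card + I.card = E0.card := card_sdiff_add_card_eq_card hIE0
    omega

lemma other_vertex {e : Finset V} (h2 : e.card = 2) {v : V} (hv : v ∈ e) :
    ∃ u, u ≠ v ∧ e = {v, u} := by
  rw [card_eq_two] at h2
  obtain ⟨a, b, hab, rfl⟩ := h2
  rcases mem_insert.1 hv with rfl | hv
  · exact ⟨b, hab.symm, rfl⟩
  · rw [mem_singleton] at hv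
    subst hv
    exact ⟨a, hab, pair_comm a v⟩

lemma main_good : ∀ (N : ℕ) (E : Finset (Finset V)), E.card ≤ N →
    Uniform 2 E → NoIsolatedEdge E → Good E := by
  intro N
  induction N with
  | zero =>
    intro E h _ _
    have hE : E = ∅ := card_eq_zero.1 (Nat.le_zero.1 h)
    subst hE
    exact ⟨∅, by simp, by simp, by simp⟩
  | succ N ih =>
    intro E hcard hU hNI
    by_cases hE : E = ∅
    · subst hE
      exact ⟨∅, by simp, by simp, by simp⟩
    obtain ⟨e, he⟩ := Finset.nonempty_of_ne_empty hE
    obtain ⟨f, hfE, hfe, v, hve, hvf⟩ := hNI e he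
    by_cases hA : ∃ z, HAdj E v z ∧ 2 ≤ (E.filter (fun g => z ∈ g)).card
    · -- some neighbor of v has degree ≥ 2
      obtain ⟨z, hvz, hz2⟩ := hA
      have hg : ∃ g ∈ E, z ∈ g ∧ v ∉ g := by
        by_contra h
        push_neg at h
        have hsub : E.filter (fun g => z ∈ g) ⊆ {({v, z} : Finset V)} := by
          intro g hgmem
          obtain ⟨hgE, hzg⟩ := mem_filter.1 hgmem
          have hvg : v ∈ g := h g hgE hzg
          have hsub2 : ({v, z} : Finset V) ⊆ g := by
            intro x hx
            rcases mem_insert.1 hx with rfl | hx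
            · exact hvg
            · rw [mem_singleton] at hx; subst hx; exact hzg
          have hpc : ({v, z} : Finset V).card = 2 := card_pair hvz.1
          have := eq_of_subset_of_card_le hsub2 (by rw [hU g hgE, hpc])
          simp [← this]
        have hle := card_le_card hsub
        rw [card_singleton] at hle
        omega
      obtain ⟨g, hgE, hzg, hvg⟩ := hg
      apply core N ih E hcard hU hNI v z hvz ∅ (by simp) (by simp) (by simp) (by simp)
      have hsub : ({e, f, g} : Finset (Finset V)) ⊆
          E.filter (fun g' => v ∈ g' ∨ z ∈ g') := by
        intro g' hg'
        simp only [mem_insert, mem_singleton] at hg'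
        rcases hg' with rfl | rfl | rfl
        · exact mem_filter.2 ⟨he, Or.inl hve⟩
        · exact mem_filter.2 ⟨hfE, Or.inl hvf⟩
        · exact mem_filter.2 ⟨hgE, Or.inr hzg⟩
      have hc3 : ({e, f, g} : Finset (Finset V)).card = 3 := by
        rw [card_insert_of_notMem, card_insert_of_notMem, card_singleton]
        · simp only [mem_singleton]
          rintro rfl
          exact hvg hvf
        · simp only [mem_insert, mem_singleton]
          push_neg
          exact ⟨fun h' => hfe h'.symm, fun h' => hvg (h' ▸ hve)⟩
      have := card_le_card hsub
      simp only [card_empty]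
      omega
    · -- all neighbors of v have degree 1
      push_neg at hA
      obtain ⟨u, hune, heq⟩ := other_vertex (hU e he) hve
      obtain ⟨z, hzne, hfeq⟩ := other_vertex (hU f hfE) hvf
      have hue : u ∈ e := by rw [heq]; simp
      have hzf : z ∈ f := by rw [hfeq]; simp
      have hvu : HAdj E v u := ⟨hune.symm, e, he, hve, hue⟩
      have hvz : HAdj E v z := ⟨hzne.symm, f, hfE, hvf, hzf⟩
      have huz : u ≠ z := by
        rintro rfl
        exact hfe (by rw [heq, hfeq])
      have hzdeg := hA z hvz
      have hzonly : ∀ g ∈ E, z ∈ g → g = f := by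
        intro g hgE hzg
        by_contra hne
        have hsub : ({g, f} : Finset (Finset V)) ⊆ E.filter (fun g' => z ∈ g') := by
          intro g' hg'
          simp only [mem_insert, mem_singleton] at hg'
          rcases hg' with rfl | rfl
          · exact mem_filter.2 ⟨hgE, hzg⟩
          · exact mem_filter.2 ⟨hfE, hzf⟩
        have := card_le_card hsub
        rw [card_pair hne] at this
        omega
      apply core N ih E hcard hU hNI v u hvu {z}
      · intro x hx
        rw [mem_singleton] at hx
        subst hx
        exact ⟨f, hfE, hzf⟩
      · intro x hx g hgE hxg
        rw [mem_singleton] at hx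
        subst hx
        rw [hzonly g hgE hxg]
        exact Or.inl hvf
      · rw [mem_singleton]; exact hzne.symm
      · rw [mem_singleton]; exact huz
      · have hsub : ({e, f} : Finset (Finset V)) ⊆
            E.filter (fun g' => v ∈ g' ∨ u ∈ g') := by
          intro g' hg'
          simp only [mem_insert, mem_singleton] at hg'
          rcases hg' with rfl | rfl
          · exact mem_filter.2 ⟨he, Or.inl hve⟩
          · exact mem_filter.2 ⟨hfE, Or.inl hvf⟩
        have := card_le_card hsub
        rw [card_pair (fun h' => hfe h'.symm)] at this
        rw [card_singleton]
        omega

lemma taut_le (E : Finset (Finset V)) (hU : Uniform 2 E) (hNI : NoIsolatedEdge E)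
    (hno : ∀ v : V, ∃ e ∈ E, v ∈ e) :
    5 * taut E ≤ 2 * (Fintype.card V + E.card) := by
  obtain ⟨T, h1, h2, h3⟩ := main_good E.card E le_rfl hU hNI
  have hle : taut E ≤ T.card := Nat.sInf_le ⟨T, h1, h2, rfl⟩
  have hfilter : (univ.filter (fun x => ∃ e ∈ E, x ∈ e)) = (univ : Finset V) :=
    filter_eq_self.2 fun x _ => hno x
  rw [hfilter, card_univ] at h3
  omega

theorem stmt7_aux :
    IsLUB {x : ℝ | ∃ (V : Type) (i : Fintype V) (E : Finset (Finset V)),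
      Uniform 2 E ∧ (∀ v : V, ∃ e ∈ E, v ∈ e) ∧ NoIsolatedEdge E ∧
      x = (taut E : ℝ) / (@Fintype.card V i + E.card)} (2 / 5) := by
  constructor
  · rintro x ⟨W, i, E, hU, hno, hNI, rfl⟩
    letI := i
    letI : DecidableEq W := Classical.decEq W
    have h := taut_le E hU hNI hno
    rcases Nat.eq_zero_or_pos (Fintype.card W + E.card) with h0 | hpos
    · have h1 : Fintype.card W = 0 := by omega
      have h2 : E.card = 0 := by omega
      rw [h1, h2]
      norm_num
    · have hpos' : (0 : ℝ) < (Fintype.card W : ℝ) + (E.card : ℝ) := by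
        have : (0 : ℝ) < ((Fintype.card W + E.card : ℕ) : ℝ) := by exact_mod_cast hpos
        push_cast at this
        linarith
      rw [div_le_div_iff₀ hpos' (by norm_num)]
      have : (5 * taut E : ℝ) ≤ (2 * (Fintype.card W + E.card) : ℝ) := by
        exact_mod_cast h
      push_cast at this ⊢
      linarith
  · intro b hb
    apply hb
    refine ⟨Fin 3, inferInstance, {{0, 1}, {1, 2}}, ?_, ?_, ?_, ?_⟩
    · intro e he
      simp only [mem_insert, mem_singleton] at he
      rcases he with rfl | rfl <;> decide
    · intro w
      fin_cases w
      · exact ⟨{0, 1}, by simp, by decide⟩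
      · exact ⟨{0, 1}, by simp, by decide⟩
      · exact ⟨{1, 2}, by simp, by decide⟩
    · intro e he
      simp only [mem_insert, mem_singleton] at he
      rcases he with rfl | rfl
      · exact ⟨{1, 2}, by simp, by decide, 1, by decide, by decide⟩
      · exact ⟨{0, 1}, by simp, by decide, 1, by decide, by decide⟩
    · have h2mem : 2 ∈ {n | ∃ T : Finset (Fin 3),
          (∀ e ∈ ({{0, 1}, {1, 2}} : Finset (Finset (Fin 3))), ∃ v ∈ T, v ∈ e) ∧
          (∀ v ∈ T, ∃ u ∈ T, HAdj {{0, 1}, {1, 2}} v u) ∧ T.card = n} := by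
        refine ⟨{0, 1}, ?_, ?_, by decide⟩
        · intro e he
          simp only [mem_insert, mem_singleton] at he
          rcases he with rfl | rfl
          · exact ⟨0, by decide, by decide⟩
          · exact ⟨1, by decide, by decide⟩
        · intro w hw
          simp only [mem_insert, mem_singleton] at hw
          rcases hw with rfl | rfl
          · exact ⟨1, by decide, by decide, {0, 1}, by simp, by decide, by decide⟩
          · exact ⟨0, by decide, by decide, {0, 1}, by simp, by decide, by decide⟩
      have hle : taut ({{0, 1}, {1, 2}} : Finset (Finset (Fin 3))) ≤ 2 := Nat.sInf_le h2mem
      obtain ⟨T, hcov, htot, hTcard⟩ := Nat.sInf_mem (⟨2, h2mem⟩ : Set.Nonempty _)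
      have h2le : 2 ≤ taut ({{0, 1}, {1, 2}} : Finset (Finset (Fin 3))) := by
        obtain ⟨x, hxT, _⟩ := hcov {0, 1} (by simp)
        obtain ⟨y, hyT, hxy⟩ := htot x hxT
        have : 1 < T.card := one_lt_card.2 ⟨x, hxT, y, hyT, hxy.1⟩
        rw [hTcard] at this
        exact this
      have htaut : taut ({{0, 1}, {1, 2}} : Finset (Finset (Fin 3))) = 2 :=
        le_antisymm hle h2le
      rw [htaut]
      have hc : @Fintype.card (Fin 3) inferInstance = 3 := Fintype.card_fin 3
      rw [hc]
      have hEc : ({{0, 1}, {1, 2}} : Finset (Finset (Fin 3))).card = 2 := by decide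
      rw [hEc]
      norm_num


/-- The supremum of `τ_t(H)/(n(H)+m(H))` over all 2-uniform hypergraphs `H`
with no isolated vertices, no isolated edges and no multiple edges equals
`2/5`. -/
theorem stmt7 :
    IsLUB {x : ℝ | ∃ (V : Type) (i : Fintype V) (E : Finset (Finset V)),
      Uniform 2 E ∧ (∀ v : V, ∃ e ∈ E, v ∈ e) ∧ NoIsolatedEdge E ∧
      x = (taut E : ℝ) / (@Fintype.card V i + E.card)} (2 / 5) := stmt7_aux
end

section
/- For k ≥ 4, if H is a k-uniform hypergraph with no isolated vertices, no isolated edges and no multiple edges, then 6·τ_t(H) ≤ 2·n(H) + 2·m(H) − n₁(H). -/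
open Finset

attribute [local instance] Classical.propDecidable

variable {V : Type*} [Fintype V] [DecidableEq V]

set_option linter.unusedSectionVars false
set_option maxHeartbeats 1000000

lemma hdeg_mono {E' E : Finset (Finset V)} (h : E' ⊆ E) (v : V) : hdeg E' v ≤ hdeg E v :=
  card_le_card (filter_subset_filter _ h)

lemma one_le_hdeg {E : Finset (Finset V)} {e : Finset V} {v : V} (he : e ∈ E) (hv : v ∈ e) :
    1 ≤ hdeg E v :=
  card_pos.mpr ⟨e, mem_filter.mpr ⟨he, hv⟩⟩

lemma two_le_hdeg {E : Finset (Finset V)} {e f : Finset V} {v : V} (he : e ∈ E) (hf : f ∈ E)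
    (hef : e ≠ f) (hv : v ∈ e) (hv' : v ∈ f) : 2 ≤ hdeg E v :=
  one_lt_card.mpr ⟨e, mem_filter.mpr ⟨he, hv⟩, f, mem_filter.mpr ⟨hf, hv'⟩, hef⟩

lemma hdeg_eq_zero {E : Finset (Finset V)} {v : V} (h : ∀ e ∈ E, v ∉ e) : hdeg E v = 0 :=
  card_eq_zero.mpr (filter_eq_empty_iff.mpr h)

lemma handshake (E : Finset (Finset V)) : ∑ v : V, hdeg E v = ∑ e ∈ E, e.card := by
  have h : ∀ v : V, hdeg E v = ∑ e ∈ E, if v ∈ e then 1 else 0 := fun v =>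
    Finset.card_filter _ _
  rw [Finset.sum_congr rfl fun v _ => h v, Finset.sum_comm]
  refine Finset.sum_congr rfl fun e _ => ?_
  rw [Finset.sum_ite_mem, Finset.univ_inter, Finset.sum_const, smul_eq_mul, mul_one]

lemma union_five {e f : Finset V} (he : 4 ≤ e.card) (hf : 4 ≤ f.card) (hef : e ≠ f) :
    5 ≤ (e ∪ f).card := by
  by_contra h
  push_neg at h
  have h1 : e = e ∪ f := eq_of_subset_of_card_le subset_union_left (by omega)
  have h2 : f = e ∪ f := eq_of_subset_of_card_le subset_union_right (by omega)
  exact hef (h1.trans h2.symm)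

lemma core_s10 (E : Finset (Finset V)) (hni : NoIsolatedEdge E) (v w : V) (hadj : HAdj E v w) :
    ∃ I E' : Finset (Finset V),
      I ⊆ E ∧ E' ⊆ E ∧
      (E.filter (fun g => v ∈ g ∨ w ∈ g)).card + I.card + E'.card = E.card ∧
      (∀ g ∈ E', v ∉ g ∧ w ∉ g) ∧
      NoIsolatedEdge E' ∧
      (∀ e ∈ I, v ∉ e ∧ w ∉ e) ∧
      (∀ e ∈ I, ∀ h ∈ E', ∀ x ∈ e, x ∉ h) ∧
      (∀ e ∈ I, ∀ f ∈ I, e ≠ f → ∀ x ∈ e, x ∉ f) ∧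
      (∀ T' : Finset V, (∀ e ∈ E', ∃ x ∈ T', x ∈ e) →
        (∀ x ∈ T', ∃ y ∈ T', HAdj E' x y) →
        ∃ T : Finset V, (∀ e ∈ E, ∃ x ∈ T, x ∈ e) ∧ (∀ x ∈ T, ∃ y ∈ T, HAdj E x y) ∧
          T.card ≤ T'.card + 2 + I.card) := by
  classical
  set G := E.filter (fun g => v ∈ g ∨ w ∈ g) with hGdef
  set E₂ := E \ G with hE₂def
  set I := E₂.filter (fun g => ∀ h ∈ E₂, h ≠ g → ∀ x ∈ g, x ∉ h) with hIdef
  set E' := E₂ \ I with hE'def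
  have hGE : G ⊆ E := filter_subset _ _
  have hE₂E : E₂ ⊆ E := sdiff_subset
  have hIE₂ : I ⊆ E₂ := filter_subset _ _
  have hE'E₂ : E' ⊆ E₂ := sdiff_subset
  have hIE : I ⊆ E := hIE₂.trans hE₂E
  have hE'E : E' ⊆ E := hE'E₂.trans hE₂E
  have hmemE₂ : ∀ g, g ∈ E₂ ↔ g ∈ E ∧ v ∉ g ∧ w ∉ g := by
    intro g
    rw [hE₂def, mem_sdiff, hGdef, mem_filter]
    tauto
  have hE₂nvw : ∀ g ∈ E₂, v ∉ g ∧ w ∉ g := fun g hg => ((hmemE₂ g).mp hg).2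
  -- the attach property for isolated edges
  have hattach : ∀ e ∈ I, ∃ x, x ∈ e ∧ ∃ h, h ∈ E ∧ (v ∈ h ∨ w ∈ h) ∧ x ∈ h := by
    intro e heI
    have heE : e ∈ E := hIE heI
    obtain ⟨f, hfE, hfe, x, hxe, hxf⟩ := hni e heE
    have hiso := (mem_filter.mp heI).2
    by_cases hfE₂ : f ∈ E₂
    · exact absurd hxf (hiso f hfE₂ hfe x hxe)
    · have : f ∈ G := by
        rcases (mem_sdiff.mp · : f ∈ E₂ → _) with _
        by_contra hfG
        exact hfE₂ (mem_sdiff.mpr ⟨hfE, hfG⟩)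
      exact ⟨x, hxe, f, hfE, (mem_filter.mp this).2, hxf⟩
  refine ⟨I, E', hIE, hE'E, ?_, ?_, ?_, ?_, ?_, ?_, ?_⟩
  · -- cardinality
    have h1 : E₂.card + G.card = E.card := card_sdiff_add_card_eq_card (filter_subset _ _)
    have h2 : E'.card + I.card = E₂.card := card_sdiff_add_card_eq_card hIE₂
    omega
  · exact fun g hg => hE₂nvw g (hE'E₂ hg)
  · -- no isolated edge in E'
    intro g hgE'
    have hgE₂ : g ∈ E₂ := hE'E₂ hgE'
    have hgnI : g ∉ I := (mem_sdiff.mp hgE').2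
    have : ¬ ∀ h ∈ E₂, h ≠ g → ∀ x ∈ g, x ∉ h := by
      intro hc
      exact hgnI (mem_filter.mpr ⟨hgE₂, hc⟩)
    push_neg at this
    obtain ⟨h, hhE₂, hhg, x, hxg, hxh⟩ := this
    have hhnI : h ∉ I := by
      intro hhI
      exact (mem_filter.mp hhI).2 g hgE₂ (Ne.symm hhg) x hxh hxg
    exact ⟨h, mem_sdiff.mpr ⟨hhE₂, hhnI⟩, hhg, x, hxg, hxh⟩
  · exact fun e he => hE₂nvw e (hIE₂ he)
  · -- I edges disjoint from E' edges
    intro e heI h hhE' x hxe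
    exact (mem_filter.mp heI).2 h (hE'E₂ hhE') (fun hh => (mem_sdiff.mp hhE').2 (hh ▸ heI)) x hxe
  · -- I pairwise disjoint
    intro e heI f hfI hef x hxe
    exact (mem_filter.mp heI).2 f (hIE₂ hfI) (fun hh => hef hh.symm) x hxe
  · -- builder
    intro T' hT'tr hT'tot
    set u : Finset V → V := fun e =>
      if hex : ∃ x, x ∈ e ∧ ∃ h, h ∈ E ∧ (v ∈ h ∨ w ∈ h) ∧ x ∈ h then hex.choose else v
      with hudef
    have huspec : ∀ e ∈ I, u e ∈ e ∧ ∃ h, h ∈ E ∧ (v ∈ h ∨ w ∈ h) ∧ u e ∈ h := by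
      intro e heI
      have hex := hattach e heI
      rw [hudef]
      simp only [dif_pos hex]
      exact hex.choose_spec
    refine ⟨(T' ∪ {v, w}) ∪ I.image u, ?_, ?_, ?_⟩
    · -- transversal
      intro g hgE
      by_cases hg : v ∈ g ∨ w ∈ g
      · rcases hg with hg | hg
        · exact ⟨v, by simp, hg⟩
        · exact ⟨w, by simp, hg⟩
      · have hgE₂ : g ∈ E₂ := (hmemE₂ g).mpr ⟨hgE, fun h => hg (Or.inl h), fun h => hg (Or.inr h)⟩
        by_cases hgI : g ∈ I
        · exact ⟨u g, mem_union.mpr (Or.inr (mem_image.mpr ⟨g, hgI, rfl⟩)),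
            (huspec g hgI).1⟩
        · obtain ⟨x, hxT', hxg⟩ := hT'tr g (mem_sdiff.mpr ⟨hgE₂, hgI⟩)
          exact ⟨x, by simp [hxT'], hxg⟩
    · -- totality
      intro x hx
      rcases mem_union.mp hx with hx1 | hx2
      · rcases mem_union.mp hx1 with hxT' | hxvw
        · obtain ⟨y, hyT', hady⟩ := hT'tot x hxT'
          exact ⟨y, by simp [hyT'], by
            obtain ⟨hne, e, he, h1, h2⟩ := hady
            exact ⟨hne, e, hE'E he, h1, h2⟩⟩
        · rcases mem_insert.mp hxvw with rfl | hxw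
          · exact ⟨w, by simp, hadj⟩
          · rw [mem_singleton.mp hxw]
            refine ⟨v, by simp, ?_⟩
            obtain ⟨hne, e, he, h1, h2⟩ := hadj
            exact ⟨hne.symm, e, he, h2, h1⟩
      · obtain ⟨e, heI, hue⟩ := mem_image.mp hx2
        obtain ⟨hxe, h, hhE, hvw, hxh⟩ := hue ▸ huspec e heI
        have hxe' : x ∈ e := hxe
        have hnv : v ∉ e := (hE₂nvw e (hIE₂ heI)).1
        have hnw : w ∉ e := (hE₂nvw e (hIE₂ heI)).2
        rcases hvw with hvh | hwh
        · exact ⟨v, by simp, fun hh => hnv (hh ▸ hxe'), h, hhE, hxh, hvh⟩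
        · exact ⟨w, by simp, fun hh => hnw (hh ▸ hxe'), h, hhE, hxh, hwh⟩
    · -- cardinality
      calc ((T' ∪ {v, w}) ∪ I.image u).card
          ≤ (T' ∪ {v, w}).card + (I.image u).card := card_union_le _ _
        _ ≤ (T'.card + 2) + I.card := by
            have h1 : (T' ∪ {v, w}).card ≤ T'.card + 2 := by
              refine (card_union_le _ _).trans ?_
              have : ({v, w} : Finset V).card ≤ 2 :=
                (card_insert_le _ _).trans (by simp)
              omega
            have h2 := card_image_le (s := I) (f := u)
            omega
        _ = T'.card + 2 + I.card := rfl

lemma small : ∀ (n : ℕ) (E : Finset (Finset V)), E.card ≤ n → (∀ e ∈ E, 2 ≤ e.card) →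
    NoIsolatedEdge E →
    ∃ T : Finset V, (∀ e ∈ E, ∃ x ∈ T, x ∈ e) ∧ (∀ x ∈ T, ∃ y ∈ T, HAdj E x y) ∧
      T.card ≤ E.card := by
  intro n
  induction n with
  | zero =>
    intro E hcard _ _
    have : E = ∅ := card_eq_zero.mp (Nat.le_zero.mp hcard)
    subst this
    exact ⟨∅, by simp, by simp, by simp⟩
  | succ n ih =>
    intro E hcard h2 hni
    rcases E.eq_empty_or_nonempty with rfl | ⟨e, heE⟩
    · exact ⟨∅, by simp, by simp, by simp⟩
    obtain ⟨f, hfE, hfe, x, hxe, hxf⟩ := hni e heE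
    obtain ⟨y, hyf, hyx⟩ := exists_mem_ne (lt_of_lt_of_le one_lt_two (h2 f hfE)) x
    have hadj : HAdj E x y := ⟨hyx.symm, f, hfE, hxf, hyf⟩
    obtain ⟨I, E', hIE, hE'E, hcards, hE'nvw, hE'ni, hInvw, hIdisjE', hIdisj, hbuild⟩ :=
      core_s10 E hni x y hadj
    have hG2 : 2 ≤ (E.filter (fun g => x ∈ g ∨ y ∈ g)).card := by
      refine one_lt_card.mpr ⟨e, mem_filter.mpr ⟨heE, Or.inl hxe⟩,
        f, mem_filter.mpr ⟨hfE, Or.inl hxf⟩, ?_⟩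
      exact fun h => hfe (h.symm)
    obtain ⟨T', hT'tr, hT'tot, hT'card⟩ := ih E' (by omega) (fun g hg => h2 g (hE'E hg)) hE'ni
    obtain ⟨T, hTtr, hTtot, hTcard⟩ := hbuild T' hT'tr hT'tot
    exact ⟨T, hTtr, hTtot, by omega⟩

lemma key : ∀ (n : ℕ) (E : Finset (Finset V)), E.card ≤ n → (∀ e ∈ E, 4 ≤ e.card) →
    NoIsolatedEdge E →
    ∃ T : Finset V, (∀ e ∈ E, ∃ x ∈ T, x ∈ e) ∧ (∀ x ∈ T, ∃ y ∈ T, HAdj E x y) ∧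
      6 * T.card ≤ 2 * E.card + ∑ x : V, min (hdeg E x) 2 := by
  intro n
  induction n with
  | zero =>
    intro E hcard _ _
    have : E = ∅ := card_eq_zero.mp (Nat.le_zero.mp hcard)
    subst this
    exact ⟨∅, by simp, by simp, by simp⟩
  | succ n ih =>
    intro E hcard h4 hni
    by_cases hA : ∀ x : V, hdeg E x ≤ 2
    · -- Case A: max degree at most 2
      obtain ⟨T, hTtr, hTtot, hTcard⟩ :=
        small E.card E le_rfl (fun e he => le_trans (by norm_num) (h4 e he)) hni
      refine ⟨T, hTtr, hTtot, ?_⟩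
      have hW : ∑ x : V, min (hdeg E x) 2 = ∑ e ∈ E, e.card := by
        rw [← handshake E]
        exact Finset.sum_congr rfl fun x _ => min_eq_left (hA x)
      have hsum : E.card * 4 ≤ ∑ e ∈ E, e.card := by
        calc E.card * 4 = ∑ _e ∈ E, 4 := by rw [Finset.sum_const, smul_eq_mul]
        _ ≤ ∑ e ∈ E, e.card := Finset.sum_le_sum h4
      omega
    · -- Case B: some vertex of degree at least 3
      push_neg at hA
      obtain ⟨v, hv3'⟩ := hA
      have hv3 : 3 ≤ hdeg E v := hv3'
      set F := E.filter (fun e => v ∈ e) with hFdef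
      have hFcard : F.card = hdeg E v := rfl
      have hFE : F ⊆ E := filter_subset _ _
      set A := (F.biUnion id).erase v with hAdef
      have hmemA : ∀ x ∈ A, x ≠ v ∧ ∃ f ∈ F, x ∈ f := by
        intro x hx
        obtain ⟨hxv, hxb⟩ := mem_erase.mp hx
        obtain ⟨f, hf, hxf⟩ := mem_biUnion.mp hxb
        exact ⟨hxv, f, hf, hxf⟩
      have hA4 : 4 ≤ A.card := by
        obtain ⟨e₁, he₁, e₂, he₂, hne⟩ := one_lt_card.mp (by omega : 1 < F.card)
        have h5 : 5 ≤ (e₁ ∪ e₂).card :=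
          union_five (h4 e₁ (hFE he₁)) (h4 e₂ (hFE he₂)) hne
        have hsub : e₁ ∪ e₂ ⊆ insert v A := by
          intro x hx
          by_cases hxv : x = v
          · exact hxv ▸ mem_insert_self v A
          · refine mem_insert_of_mem (mem_erase.mpr ⟨hxv, mem_biUnion.mpr ?_⟩)
            rcases mem_union.mp hx with h | h
            · exact ⟨e₁, he₁, h⟩
            · exact ⟨e₂, he₂, h⟩
        have := (card_le_card hsub).trans (card_insert_le v A)
        omega
      -- pointwise facts that hold in both subcases
      have hE'subEF : ∀ E' : Finset (Finset V), E' ⊆ E → (∀ g ∈ E', v ∉ g) → E' ⊆ E \ F := by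
        intro E' hE'E hnv g hg
        exact mem_sdiff.mpr ⟨hE'E hg, fun hgF => hnv g hg ((mem_filter.mp hgF).2)⟩
      by_cases hB1 : ∃ w ∈ A, 2 ≤ hdeg (E \ F) w
      · -- Subcase B1
        obtain ⟨w, hwA, hw2⟩ := hB1
        obtain ⟨hwv, f, hfF, hwf⟩ := hmemA w hwA
        have hadj : HAdj E v w := ⟨hwv.symm, f, hFE hfF, (mem_filter.mp hfF).2, hwf⟩
        obtain ⟨I, E', hIE, hE'E, hcards, hE'nvw, hE'ni, hInvw, hIdisjE', hIdisj, hbuild⟩ :=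
          core_s10 E hni v w hadj
        set G := E.filter (fun g => v ∈ g ∨ w ∈ g) with hGdef
        have hG5 : 5 ≤ G.card := by
          set Fw := (E \ F).filter (fun g => w ∈ g) with hFwdef
          have hFwcard : Fw.card = hdeg (E \ F) w := rfl
          have hFsubG : F ⊆ G := fun g hg =>
            mem_filter.mpr ⟨hFE hg, Or.inl (mem_filter.mp hg).2⟩
          have hFwsubG : Fw ⊆ G := fun g hg =>
            mem_filter.mpr ⟨(mem_sdiff.mp (mem_filter.mp hg).1).1, Or.inr (mem_filter.mp hg).2⟩
          have hdisj : Disjoint F Fw := by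
            rw [disjoint_left]
            intro g hgF hgFw
            exact (mem_sdiff.mp (mem_filter.mp hgFw).1).2 hgF
          have hunion : F ∪ Fw ⊆ G := union_subset hFsubG hFwsubG
          have := card_le_card hunion
          rw [card_union_of_disjoint hdisj] at this
          omega
        obtain ⟨T', hT'tr, hT'tot, hT'6⟩ :=
          ih E' (by omega) (fun g hg => h4 g (hE'E hg)) hE'ni
        obtain ⟨T, hTtr, hTtot, hTcard⟩ := hbuild T' hT'tr hT'tot
        refine ⟨T, hTtr, hTtot, ?_⟩
        -- W accounting
        have hmle : ∀ x : V, min (hdeg E' x) 2 ≤ min (hdeg E x) 2 := fun x =>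
          min_le_min (hdeg_mono hE'E x) le_rfl
        set c : V → ℕ := fun x => min (hdeg E x) 2 - min (hdeg E' x) 2 with hcdef
        have hWsplit : ∑ x : V, min (hdeg E x) 2
            = ∑ x : V, min (hdeg E' x) 2 + ∑ x : V, c x := by
          rw [← Finset.sum_add_distrib]
          exact Finset.sum_congr rfl fun x _ => (Nat.add_sub_cancel' (hmle x)).symm
        set U := I.biUnion id with hUdef
        have hvU : v ∉ U := by
          intro h
          obtain ⟨e, heI, hve⟩ := mem_biUnion.mp h
          exact (hInvw e heI).1 hve
        have hwU : w ∉ U := by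
          intro h
          obtain ⟨e, heI, hwe⟩ := mem_biUnion.mp h
          exact (hInvw e heI).2 hwe
        have hcv : c v = 2 := by
          have h1 : min (hdeg E v) 2 = 2 := min_eq_right (by omega)
          have h2 : hdeg E' v = 0 := hdeg_eq_zero fun g hg => (hE'nvw g hg).1
          simp [hcdef, h1, h2]
        have hcw : c w = 2 := by
          have hw2' : 2 ≤ hdeg E w := le_trans hw2 (hdeg_mono sdiff_subset w)
          have h1 : min (hdeg E w) 2 = 2 := min_eq_right (by omega)
          have h2 : hdeg E' w = 0 := hdeg_eq_zero fun g hg => (hE'nvw g hg).2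
          simp [hcdef, h1, h2]
        have hcU : 4 * I.card ≤ ∑ x ∈ U, c x := by
          have hpd : (↑I : Set (Finset V)).PairwiseDisjoint id := by
            intro e he f hf hef
            rw [Function.onFun, disjoint_left]
            intro x hxe hxf
            exact hIdisj e he f hf hef x hxe hxf
          rw [hUdef, Finset.sum_biUnion hpd]
          calc 4 * I.card = ∑ _e ∈ I, 4 := by rw [Finset.sum_const, smul_eq_mul, mul_comm]
          _ ≤ ∑ e ∈ I, ∑ x ∈ e, c x := by
              refine Finset.sum_le_sum fun e heI => ?_
              calc (4 : ℕ) ≤ e.card := h4 e (hIE heI)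
              _ = ∑ _x ∈ e, 1 := by rw [Finset.sum_const, smul_eq_mul, mul_one]
              _ ≤ ∑ x ∈ e, c x := by
                  refine Finset.sum_le_sum fun x hx => ?_
                  have h1 : 1 ≤ hdeg E x := one_le_hdeg (hIE heI) hx
                  have h2 : hdeg E' x = 0 :=
                    hdeg_eq_zero fun g hg hxg => hIdisjE' e heI g hg x hx hxg
                  simp only [hcdef, h2]
                  omega
        have hS : 2 + 2 + 4 * I.card ≤ ∑ x : V, c x := by
          have hsub : insert v (insert w U) ⊆ univ := subset_univ _
          have h1 : ∑ x ∈ insert v (insert w U), c x ≤ ∑ x : V, c x :=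
            Finset.sum_le_sum_of_subset hsub
          have hvins : v ∉ insert w U := by
            intro h
            rcases mem_insert.mp h with h | h
            · exact hwv h.symm
            · exact hvU h
          rw [Finset.sum_insert hvins, Finset.sum_insert hwU] at h1
          omega
        omega
      · -- Subcase B2
        push_neg at hB1
        have hB2 : ∀ x ∈ A, hdeg (E \ F) x ≤ 1 := fun x hx => by
          have := hB1 x hx; omega
        obtain ⟨w, hwA⟩ := card_pos.mp (by omega : 0 < A.card)
        obtain ⟨hwv, f, hfF, hwf⟩ := hmemA w hwA
        have hadj : HAdj E v w := ⟨hwv.symm, f, hFE hfF, (mem_filter.mp hfF).2, hwf⟩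
        obtain ⟨I, E', hIE, hE'E, hcards, hE'nvw, hE'ni, hInvw, hIdisjE', hIdisj, hbuild⟩ :=
          core_s10 E hni v w hadj
        set G := E.filter (fun g => v ∈ g ∨ w ∈ g) with hGdef
        have hG3 : 3 ≤ G.card := by
          have hFsubG : F ⊆ G := fun g hg =>
            mem_filter.mpr ⟨hFE hg, Or.inl (mem_filter.mp hg).2⟩
          have := card_le_card hFsubG
          omega
        obtain ⟨T', hT'tr, hT'tot, hT'6⟩ :=
          ih E' (by omega) (fun g hg => h4 g (hE'E hg)) hE'ni
        obtain ⟨T, hTtr, hTtot, hTcard⟩ := hbuild T' hT'tr hT'tot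
        refine ⟨T, hTtr, hTtot, ?_⟩
        have hmle : ∀ x : V, min (hdeg E' x) 2 ≤ min (hdeg E x) 2 := fun x =>
          min_le_min (hdeg_mono hE'E x) le_rfl
        set c : V → ℕ := fun x => min (hdeg E x) 2 - min (hdeg E' x) 2 with hcdef
        have hWsplit : ∑ x : V, min (hdeg E x) 2
            = ∑ x : V, min (hdeg E' x) 2 + ∑ x : V, c x := by
          rw [← Finset.sum_add_distrib]
          exact Finset.sum_congr rfl fun x _ => (Nat.add_sub_cancel' (hmle x)).symm
        set U := I.biUnion id with hUdef
        have hvU : v ∉ U := by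
          intro h
          obtain ⟨e, heI, hve⟩ := mem_biUnion.mp h
          exact (hInvw e heI).1 hve
        have hcv : c v = 2 := by
          have h1 : min (hdeg E v) 2 = 2 := min_eq_right (by omega)
          have h2 : hdeg E' v = 0 := hdeg_eq_zero fun g hg => (hE'nvw g hg).1
          simp [hcdef, h1, h2]
        have hE'EF : E' ⊆ E \ F := hE'subEF E' hE'E (fun g hg => (hE'nvw g hg).1)
        have hcA : ∀ x ∈ A, 1 ≤ c x := by
          intro x hxA
          obtain ⟨hxv, f', hf'F, hxf'⟩ := hmemA x hxA
          have hE'x : hdeg E' x ≤ 1 := le_trans (hdeg_mono hE'EF x) (hB2 x hxA)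
          have h1 : 1 ≤ hdeg E x := one_le_hdeg (hFE hf'F) hxf'
          by_cases h2 : 2 ≤ hdeg E x
          · have hminE : min (hdeg E x) 2 = 2 := min_eq_right h2
            have hminE' : min (hdeg E' x) 2 ≤ 1 := le_trans (min_le_left _ _) hE'x
            simp only [hcdef]
            omega
          · have hdE : hdeg E x = 1 := by omega
            have hE'0 : hdeg E' x = 0 := by
              by_contra h0
              have hpos : 0 < (E'.filter (fun e => x ∈ e)).card := by
                have : hdeg E' x ≠ 0 := h0
                have : 0 < hdeg E' x := Nat.pos_of_ne_zero this
                exact this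
              obtain ⟨g, hgmem⟩ := card_pos.mp hpos
              obtain ⟨hgE', hxg⟩ := mem_filter.mp hgmem
              have hgf' : g ≠ f' := fun h =>
                (hE'nvw g hgE').1 (h ▸ (mem_filter.mp hf'F).2)
              have := two_le_hdeg (hE'E hgE') (hFE hf'F) hgf' hxg hxf'
              omega
            have hminE : min (hdeg E x) 2 = 1 := by rw [hdE]; norm_num
            have hminE' : min (hdeg E' x) 2 = 0 := by rw [hE'0]; norm_num
            simp only [hcdef, hminE, hminE']
            omega
        have hpd : (↑I : Set (Finset V)).PairwiseDisjoint id := by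
          intro e he f' hf' hef
          rw [Function.onFun, disjoint_left]
          intro x hxe hxf
          exact hIdisj e he f' hf' hef x hxe hxf
        have hcU : ∀ e ∈ I, e.card + (e.filter (· ∈ A)).card ≤ ∑ x ∈ e, c x := by
          intro e heI
          have hpt : ∀ x ∈ e, (if x ∈ A then 2 else 1) ≤ c x := by
            intro x hx
            have hz : hdeg E' x = 0 :=
              hdeg_eq_zero fun g hg hxg => hIdisjE' e heI g hg x hx hxg
            have hminz : min (hdeg E' x) 2 = 0 := by rw [hz]; norm_num
            by_cases hxA : x ∈ A
            · obtain ⟨hxv, f', hf'F, hxf'⟩ := hmemA x hxA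
              have hef' : e ≠ f' := fun h => (hInvw e heI).1 (h ▸ (mem_filter.mp hf'F).2)
              have h2 : 2 ≤ hdeg E x := two_le_hdeg (hIE heI) (hFE hf'F) hef' hx hxf'
              have hminE : min (hdeg E x) 2 = 2 := min_eq_right h2
              simp only [hcdef, if_pos hxA, hminE, hminz]
              omega
            · have h1 : 1 ≤ hdeg E x := one_le_hdeg (hIE heI) hx
              have hminE : 1 ≤ min (hdeg E x) 2 := le_min h1 (by norm_num)
              simp only [hcdef, if_neg hxA, hminz]
              omega
          calc e.card + (e.filter (· ∈ A)).card
              = ∑ x ∈ e, (if x ∈ A then 2 else 1) := by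
                have hrw : ∀ x ∈ e, (if x ∈ A then 2 else 1) = 1 + (if x ∈ A then 1 else 0) := by
                  intro x _; split <;> rfl
                rw [Finset.sum_congr rfl hrw, Finset.sum_add_distrib, Finset.sum_const,
                  smul_eq_mul, mul_one, ← Finset.card_filter]
            _ ≤ ∑ x ∈ e, c x := Finset.sum_le_sum hpt
        have hsumU : ∑ e ∈ I, (e.card + (e.filter (· ∈ A)).card) ≤ ∑ x ∈ U, c x := by
          rw [hUdef, Finset.sum_biUnion hpd]
          exact Finset.sum_le_sum hcU
        have hI4 : ∑ e ∈ I, (e.card + (e.filter (· ∈ A)).card)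
            ≥ 4 * I.card + (A ∩ U).card := by
          have h1 : (A ∩ U).card ≤ ∑ e ∈ I, (e.filter (· ∈ A)).card := by
            have hsub : A ∩ U ⊆ I.biUnion (fun e => e.filter (· ∈ A)) := by
              intro x hx
              obtain ⟨hxA, hxU⟩ := mem_inter.mp hx
              obtain ⟨e, heI, hxe⟩ := mem_biUnion.mp hxU
              exact mem_biUnion.mpr ⟨e, heI, mem_filter.mpr ⟨hxe, hxA⟩⟩
            exact (card_le_card hsub).trans (card_biUnion_le)
          have h2 : 4 * I.card ≤ ∑ e ∈ I, e.card := by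
            calc 4 * I.card = ∑ _e ∈ I, 4 := by rw [Finset.sum_const, smul_eq_mul, mul_comm]
            _ ≤ ∑ e ∈ I, e.card := Finset.sum_le_sum fun e heI => h4 e (hIE heI)
          rw [Finset.sum_add_distrib]
          omega
        have hS : 2 + A.card + 4 * I.card ≤ ∑ x : V, c x := by
          have hvins : v ∉ A ∪ U := by
            intro h
            rcases mem_union.mp h with h | h
            · exact (hmemA v h).1 rfl
            · exact hvU h
          have h1 : ∑ x ∈ insert v (A ∪ U), c x ≤ ∑ x : V, c x :=
            Finset.sum_le_sum_of_subset (subset_univ _)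
          rw [Finset.sum_insert hvins] at h1
          have h2 : ∑ x ∈ A ∪ U, c x = ∑ x ∈ A \ U, c x + ∑ x ∈ U, c x := by
            rw [← Finset.sdiff_union_self_eq_union, Finset.sum_union sdiff_disjoint]
          have h3 : (A \ U).card ≤ ∑ x ∈ A \ U, c x := by
            calc (A \ U).card = ∑ _x ∈ A \ U, 1 := by
                  rw [Finset.sum_const, smul_eq_mul, mul_one]
            _ ≤ ∑ x ∈ A \ U, c x :=
                  Finset.sum_le_sum fun x hx => hcA x (mem_sdiff.mp hx).1
          have h4' : (A \ U).card + (A ∩ U).card = A.card := card_sdiff_add_card_inter A U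
          omega
        omega


/-- For `k ≥ 4`, if `H` is a `k`-uniform hypergraph with no isolated vertices,
no isolated edges and no multiple edges, then
`6·τ_t(H) ≤ 2·n(H) + 2·m(H) − n₁(H)`. -/
theorem stmt10 (k : ℕ) (hk : 4 ≤ k) (E : Finset (Finset V)) (hu : Uniform k E)
    (hv : ∀ v : V, ∃ e ∈ E, v ∈ e) (he : NoIsolatedEdge E) :
    6 * taut E ≤ 2 * Fintype.card V + 2 * E.card - n1 E := by
  have h4 : ∀ e ∈ E, 4 ≤ e.card := fun e heE => (hu e heE) ▸ hk
  obtain ⟨T, hTtr, hTtot, hT6⟩ := key E.card E le_rfl h4 he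
  have htaut : taut E ≤ T.card := Nat.sInf_le ⟨T, hTtr, hTtot, rfl⟩
  have hWn1 : ∑ x : V, min (hdeg E x) 2 + n1 E = 2 * Fintype.card V := by
    have hn1 : n1 E = ∑ x : V, if hdeg E x = 1 then 1 else 0 := Finset.card_filter _ _
    rw [hn1, ← Finset.sum_add_distrib]
    have hpt : ∀ x : V, min (hdeg E x) 2 + (if hdeg E x = 1 then 1 else 0) = 2 := by
      intro x
      obtain ⟨e, heE, hxe⟩ := hv x
      have h1 : 1 ≤ hdeg E x := one_le_hdeg heE hxe
      by_cases hx1 : hdeg E x = 1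
      · rw [hx1, if_pos rfl]; norm_num
      · have h2 : 2 ≤ hdeg E x := by omega
        rw [min_eq_right h2, if_neg hx1]
    rw [Finset.sum_congr rfl fun x _ => hpt x, Finset.sum_const, smul_eq_mul,
      Finset.card_univ, mul_comm]
  omega
end
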